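/- Fix an integer n ≥ 2, let r = √2/2, and define f(d) = n(n−1)/2^d and g(d) = 1 − [(1 − r^d)(1 − (n − 1)(1 − r²)^{d/2}/2)]^n for positive integers d. Then g(d)/f(d) is asymptotically equivalent to 2^{d/2}(n+1)/(2(n−1)) as d → ∞, and consequently g(d)/f(d) → ∞ as d → ∞. -/

import Mathlib

open Filter

/-- **Statement 4, case 3.** For a fixed integer `n ≥ 2` and `r = √2/2`, with
`f(d) = n(n-1)/2^d` and `g(d) = 1 - [(1 - r^d)(1 - (n-1)(1-r²)^{d/2}/2)]^n`,
the quotient `g(d)/f(d)` is asymptotically `2^{d/2}(n+1)/(2(n-1))`, and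
consequently `g(d)/f(d) → ∞`. -/
theorem failure_bounds_quotient_critical_r
    (n : ℕ) (hn : 2 ≤ n) (r : ℝ) (hr : r = Real.sqrt 2 / 2) :
    Tendsto (fun d : ℕ =>
        ((1 - ((1 - r ^ d) * (1 - ((n : ℝ) - 1) * (1 - r ^ 2) ^ ((d : ℝ) / 2) / 2)) ^ n) /
            ((n : ℝ) * ((n : ℝ) - 1) / 2 ^ d)) /
          ((2 : ℝ) ^ ((d : ℝ) / 2) * ((n : ℝ) + 1) / (2 * ((n : ℝ) - 1))))
      atTop (nhds 1) ∧
    Tendsto (fun d : ℕ =>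
        (1 - ((1 - r ^ d) * (1 - ((n : ℝ) - 1) * (1 - r ^ 2) ^ ((d : ℝ) / 2) / 2)) ^ n) /
          ((n : ℝ) * ((n : ℝ) - 1) / 2 ^ d))
      atTop atTop := by
  have hnR : (2 : ℝ) ≤ (n : ℝ) := by exact_mod_cast hn
  have hn0 : (n : ℝ) ≠ 0 := by linarith
  have hn1 : (n : ℝ) - 1 ≠ 0 := by linarith
  have hn1' : (n : ℝ) + 1 ≠ 0 := by linarith
  set F : ℝ → ℝ := fun y => 1 - ((1 - y) * (1 - ((n : ℝ) - 1) * y / 2)) ^ n with hF_def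
  set X : ℕ → ℝ := fun d => (2 : ℝ) ^ (-((d : ℝ) / 2)) with hX_def
  have hXpos : ∀ d : ℕ, 0 < X d := fun d => Real.rpow_pos_of_pos two_pos _
  -- r related facts
  have hr2 : r ^ 2 = 1 / 2 := by
    rw [hr]; rw [div_pow, Real.sq_sqrt (by norm_num : (0:ℝ) ≤ 2)]; norm_num
  have hrval : r = (2 : ℝ) ^ (-(1 / 2 : ℝ)) := by
    rw [hr, Real.sqrt_eq_rpow]
    rw [show (2:ℝ) ^ ((1:ℝ)/2) / 2 = (2:ℝ) ^ ((1:ℝ)/2 - 1) by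
      rw [Real.rpow_sub two_pos, Real.rpow_one]]
    congr 1
    norm_num
  have hrd : ∀ d : ℕ, r ^ d = X d := by
    intro d
    rw [hrval, ← Real.rpow_natCast ((2:ℝ) ^ (-(1/2 : ℝ))) d,
      ← Real.rpow_mul (by norm_num : (0:ℝ) ≤ 2)]
    ring_nf
    simp only [hX_def]
    ring_nf
  have hhalf : ∀ d : ℕ, (1 - r ^ 2) ^ ((d : ℝ) / 2) = X d := by
    intro d
    rw [hr2]
    rw [show (1 - 1/2 : ℝ) = 2⁻¹ by norm_num,
      Real.inv_rpow (by norm_num : (0:ℝ) ≤ 2), ← Real.rpow_neg (by norm_num : (0:ℝ) ≤ 2)]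
  have h2d : ∀ d : ℕ, (2 : ℝ) ^ d = (X d * X d)⁻¹ := by
    intro d
    rw [hX_def]
    rw [← Real.rpow_natCast 2 d, ← Real.rpow_add two_pos, ← Real.rpow_neg (by norm_num : (0:ℝ) ≤ 2)]
    ring_nf
  have h2half : ∀ d : ℕ, (2 : ℝ) ^ ((d : ℝ) / 2) = (X d)⁻¹ := by
    intro d
    rw [hX_def, ← Real.rpow_neg (by norm_num : (0:ℝ) ≤ 2), neg_neg]
  -- the key pointwise identity
  have key : ∀ d : ℕ,
      ((1 - ((1 - r ^ d) * (1 - ((n : ℝ) - 1) * (1 - r ^ 2) ^ ((d : ℝ) / 2) / 2)) ^ n) /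
            ((n : ℝ) * ((n : ℝ) - 1) / 2 ^ d)) /
          ((2 : ℝ) ^ ((d : ℝ) / 2) * ((n : ℝ) + 1) / (2 * ((n : ℝ) - 1)))
        = slope F 0 (X d) * (2 / ((n : ℝ) * ((n : ℝ) + 1))) := by
    intro d
    rw [hrd d, hhalf d, h2d d, h2half d, slope_def_field, hF_def]
    have hx0 : X d ≠ 0 := (hXpos d).ne'
    simp only
    rw [show (1 - ((1 - (0:ℝ)) * (1 - ((n : ℝ) - 1) * 0 / 2)) ^ n) = 0 by norm_num]
    field_simp
    ring
  -- derivative of F at 0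
  have hd1 : HasDerivAt (fun y : ℝ => 1 - y) (-1) 0 := by
    simpa using (hasDerivAt_id (0:ℝ)).const_sub 1
  have hd2 : HasDerivAt (fun y : ℝ => 1 - ((n : ℝ) - 1) * y / 2)
      (-(((n : ℝ) - 1) * 1 / 2)) 0 := by
    exact (((hasDerivAt_id (0:ℝ)).const_mul ((n : ℝ) - 1)).div_const 2).const_sub 1
  have hF : HasDerivAt F ((n : ℝ) * ((n : ℝ) + 1) / 2) 0 := by
    have h := ((hd1.mul hd2).pow n).const_sub 1
    refine h.congr_deriv ?_
    simp only [Pi.mul_apply]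
    norm_num
    ring
  have hslope : Tendsto (slope F 0) (nhdsWithin 0 {(0:ℝ)}ᶜ)
      (nhds ((n : ℝ) * ((n : ℝ) + 1) / 2)) :=
    hasDerivAt_iff_tendsto_slope.mp hF
  -- X tends to 0 within {≠ 0}
  have hXtop : Tendsto (fun d : ℕ => (2 : ℝ) ^ ((d : ℝ) / 2)) atTop atTop := by
    have h1 : Tendsto (fun d : ℕ => (d : ℝ) / 2) atTop atTop :=
      (tendsto_natCast_atTop_atTop).atTop_div_const two_pos
    have h2 : Tendsto (fun y : ℝ => (2 : ℝ) ^ y) atTop atTop := by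
      simp_rw [Real.rpow_def_of_pos two_pos]
      exact Real.tendsto_exp_atTop.comp
        ((tendsto_id (α := ℝ)).const_mul_atTop (Real.log_pos one_lt_two))
    exact h2.comp h1
  have hX0 : Tendsto X atTop (nhdsWithin 0 {(0:ℝ)}ᶜ) := by
    rw [tendsto_nhdsWithin_iff]
    constructor
    · have := hXtop.inv_tendsto_atTop
      refine this.congr fun d => ?_
      simp only [Pi.inv_apply, hX_def, ← Real.rpow_neg (by norm_num : (0:ℝ) ≤ 2)]
    · exact Eventually.of_forall fun d => (hXpos d).ne'
  have h1 : Tendsto (fun d : ℕ => slope F 0 (X d) * (2 / ((n : ℝ) * ((n : ℝ) + 1))))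
      atTop (nhds 1) := by
    have := (hslope.comp hX0).mul_const (2 / ((n : ℝ) * ((n : ℝ) + 1)))
    rw [show (n : ℝ) * ((n : ℝ) + 1) / 2 * (2 / ((n : ℝ) * ((n : ℝ) + 1))) = 1 by
      field_simp] at this
    exact this
  have hmain : Tendsto (fun d : ℕ =>
      ((1 - ((1 - r ^ d) * (1 - ((n : ℝ) - 1) * (1 - r ^ 2) ^ ((d : ℝ) / 2) / 2)) ^ n) /
          ((n : ℝ) * ((n : ℝ) - 1) / 2 ^ d)) /
        ((2 : ℝ) ^ ((d : ℝ) / 2) * ((n : ℝ) + 1) / (2 * ((n : ℝ) - 1))))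
      atTop (nhds 1) := by
    refine h1.congr fun d => (key d).symm
  refine ⟨hmain, ?_⟩
  have hKtop : Tendsto (fun d : ℕ =>
      (2 : ℝ) ^ ((d : ℝ) / 2) * ((n : ℝ) + 1) / (2 * ((n : ℝ) - 1))) atTop atTop := by
    have := (hXtop.atTop_mul_const (by linarith : (0:ℝ) < (n : ℝ) + 1)).atTop_div_const
      (by linarith : (0:ℝ) < 2 * ((n : ℝ) - 1))
    exact this
  have h2 := hmain.pos_mul_atTop one_pos hKtop
  refine h2.congr fun d => ?_
  have hKpos : (0:ℝ) < (2 : ℝ) ^ ((d : ℝ) / 2) * ((n : ℝ) + 1) / (2 * ((n : ℝ) - 1)) :=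
    div_pos (mul_pos (Real.rpow_pos_of_pos two_pos _) (by linarith)) (by linarith)
  exact div_mul_cancel₀ _ hKpos.ne'
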